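/- Inexact linear minimization with KWSA gradient estimates: suppose F : ℝ^d → ℝ is differentiable with L-Lipschitz gradient, C is a nonempty compact convex subset of ℝ^d with ‖u‖ ≤ R for every u ∈ C, and c > 0. Then for every x ∈ ℝ^d, min_{v ∈ C} ⟨v, g_c(F)(x)⟩ ≤ min_{s ∈ C} ⟨s, ∇F(x)⟩ + cLRd/2. -/

import Mathlib

open scoped RealInnerProductSpace BigOperators

/-- The KWSA (Kiefer–Wolfowitz) gradient estimate of `F` at `x` with smoothing
parameter `c`: `g_c(F)(x) = ∑ i, ((F(x + c·e_i) − F(x))/c)·e_i`. -/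
noncomputable def kwsa (d : ℕ) (F : EuclideanSpace ℝ (Fin d) → ℝ) (c : ℝ)
    (x : EuclideanSpace ℝ (Fin d)) : EuclideanSpace ℝ (Fin d) :=
  ∑ i : Fin d, ((F (x + c • EuclideanSpace.single i (1 : ℝ)) - F x) / c) •
    EuclideanSpace.single i (1 : ℝ)

/-- Descent lemma: quadratic upper bound for functions with Lipschitz gradient. -/
lemma kwsa_descent (d : ℕ) (F : EuclideanSpace ℝ (Fin d) → ℝ)
    (hF : Differentiable ℝ F) (L : ℝ) (hL : 0 ≤ L)
    (hlip : ∀ u w, ‖gradient F u - gradient F w‖ ≤ L * ‖u - w‖)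
    (x h : EuclideanSpace ℝ (Fin d)) :
    |F (x + h) - F x - ⟪gradient F x, h⟫| ≤ L * ‖h‖ ^ 2 / 2 := by
  set φ : ℝ → ℝ := fun t => F (x + t • h) - F x - t * ⟪gradient F x, h⟫ with hφdef
  have hcurve : ∀ t : ℝ, HasDerivAt (fun s : ℝ => x + s • h) h t := fun t => by
    simpa using ((hasDerivAt_id t).smul_const h).const_add x
  have hFd : ∀ t : ℝ,
      HasDerivAt (fun s : ℝ => F (x + s • h)) ⟪gradient F (x + t • h), h⟫ t := by
    intro t
    have hg := (hF (x + t • h)).hasGradientAt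
    have hfd := hg.hasFDerivAt
    have := hfd.comp_hasDerivAt t (hcurve t)
    simpa [InnerProductSpace.toDual_apply_apply, Function.comp_def] using this
  have hφ : ∀ t : ℝ,
      HasDerivAt φ (⟪gradient F (x + t • h), h⟫ - ⟪gradient F x, h⟫) t := by
    intro t
    have h1 := (hFd t).sub_const (F x)
    have h2 : HasDerivAt (fun s : ℝ => s * ⟪gradient F x, h⟫) ⟪gradient F x, h⟫ t := by
      simpa using (hasDerivAt_id t).mul_const (⟪gradient F x, h⟫ : ℝ)
    exact h1.sub h2
  have hB : ∀ t : ℝ, HasDerivAt (fun t : ℝ => L * ‖h‖ ^ 2 / 2 * t ^ 2)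
      (L * ‖h‖ ^ 2 * t) t := by
    intro t
    have := (hasDerivAt_pow 2 t).const_mul (L * ‖h‖ ^ 2 / 2)
    refine this.congr_deriv ?_
    ring
  have bound : ∀ t ∈ Set.Ico (0 : ℝ) 1,
      ‖⟪gradient F (x + t • h), h⟫ - ⟪gradient F x, h⟫‖ ≤ L * ‖h‖ ^ 2 * t := by
    intro t ht
    rw [← inner_sub_left, Real.norm_eq_abs]
    calc |⟪gradient F (x + t • h) - gradient F x, h⟫|
        ≤ ‖gradient F (x + t • h) - gradient F x‖ * ‖h‖ := abs_real_inner_le_norm _ _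
      _ ≤ (L * ‖x + t • h - x‖) * ‖h‖ := by
          exact mul_le_mul_of_nonneg_right (hlip _ _) (norm_nonneg _)
      _ = L * ‖h‖ ^ 2 * t := by
          have : x + t • h - x = t • h := by abel
          rw [this, norm_smul, Real.norm_eq_abs, abs_of_nonneg ht.1]
          ring
  have key := image_norm_le_of_norm_deriv_right_le_deriv_boundary
    (f := φ) (f' := fun t => ⟪gradient F (x + t • h), h⟫ - ⟪gradient F x, h⟫)
    (a := 0) (b := 1)
    (fun t _ => (hφ t).continuousAt.continuousWithinAt)
    (fun t _ => (hφ t).hasDerivWithinAt)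
    (by simp [hφdef]) hB bound (Set.right_mem_Icc.mpr zero_le_one)
  have hφ1 : φ 1 = F (x + h) - F x - ⟪gradient F x, h⟫ := by simp [hφdef]
  rw [hφ1, Real.norm_eq_abs] at key
  calc |F (x + h) - F x - ⟪gradient F x, h⟫| ≤ L * ‖h‖ ^ 2 / 2 * 1 ^ 2 := key
    _ = L * ‖h‖ ^ 2 / 2 := by ring

theorem kwsa_inexact_linear_minimization
    (d : ℕ) (hd : 1 ≤ d)
    (F : EuclideanSpace ℝ (Fin d) → ℝ)
    (hFdiff : Differentiable ℝ F)
    (L : ℝ) (hL : 0 < L)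
    (hFlip : ∀ u w, ‖gradient F u - gradient F w‖ ≤ L * ‖u - w‖)
    (C : Set (EuclideanSpace ℝ (Fin d)))
    (hCne : C.Nonempty) (hCcomp : IsCompact C) (hCconv : Convex ℝ C)
    (R : ℝ) (hR : 0 < R) (hbound : ∀ u ∈ C, ‖u‖ ≤ R)
    (c : ℝ) (hc : 0 < c)
    (x : EuclideanSpace ℝ (Fin d)) :
    sInf ((fun v => ⟪v, kwsa d F c x⟫) '' C) ≤
      sInf ((fun s => ⟪s, gradient F x⟫) '' C) + c * L * R * d / 2 := by
  set g := gradient F x with hg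
  set a : Fin d → ℝ := fun i => (F (x + c • EuclideanSpace.single i (1 : ℝ)) - F x) / c
    with ha
  have herr : ∀ i : Fin d, |a i - g i| ≤ L * c / 2 := by
    intro i
    have hdes := kwsa_descent d F hFdiff L hL.le hFlip x
      (c • EuclideanSpace.single i (1 : ℝ))
    have hnorm : ‖c • (EuclideanSpace.single i (1 : ℝ) : EuclideanSpace ℝ (Fin d))‖ = c := by
      rw [norm_smul]
      simp [abs_of_pos hc]
    have hip : ⟪g, c • (EuclideanSpace.single i (1 : ℝ) : EuclideanSpace ℝ (Fin d))⟫
        = c * g i := by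
      rw [real_inner_smul_right]
      simp [EuclideanSpace.inner_single_right]
    rw [hnorm, hip] at hdes
    have heq : a i - g i = (F (x + c • EuclideanSpace.single i (1 : ℝ)) - F x - c * g i) / c := by
      rw [ha]
      field_simp
    rw [heq, abs_div, abs_of_pos hc, div_le_iff₀ hc]
    nlinarith [hdes]
  have hvi : ∀ (v : EuclideanSpace ℝ (Fin d)) (i : Fin d), |v i| ≤ ‖v‖ := by
    intro v i
    have := abs_real_inner_le_norm v (EuclideanSpace.single i (1 : ℝ))
    simpa [EuclideanSpace.inner_single_right] using this
  have hvbound : ∀ v ∈ C, ⟪v, kwsa d F c x⟫ ≤ ⟪v, g⟫ + c * L * R * d / 2 := by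
    intro v hv
    have h1 : ⟪v, kwsa d F c x⟫ = ∑ i : Fin d, v i * a i := by
      rw [kwsa, inner_sum]
      refine Finset.sum_congr rfl fun i _ => ?_
      rw [real_inner_smul_right]
      simp [EuclideanSpace.inner_single_right, ha, mul_comm]
    have h2 : ⟪v, g⟫ = ∑ i : Fin d, v i * g i := by
      rw [PiLp.inner_apply]
      simp [mul_comm]
    rw [h1, h2]
    have hsum : ∑ i : Fin d, v i * a i - ∑ i : Fin d, v i * g i
        = ∑ i : Fin d, v i * (a i - g i) := by
      rw [← Finset.sum_sub_distrib]
      exact Finset.sum_congr rfl fun i _ => by ring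
    have hstep : ∑ i : Fin d, v i * (a i - g i) ≤ c * L * R * d / 2 := by
      calc ∑ i : Fin d, v i * (a i - g i)
          ≤ ∑ i : Fin d, |v i * (a i - g i)| :=
            Finset.sum_le_sum fun i _ => le_abs_self _
        _ ≤ ∑ _i : Fin d, R * (L * c / 2) := by
            refine Finset.sum_le_sum fun i _ => ?_
            rw [abs_mul]
            exact mul_le_mul ((hvi v i).trans (hbound v hv)) (herr i) (abs_nonneg _)
              hR.le
        _ = c * L * R * d / 2 := by
            rw [Finset.sum_const, Finset.card_univ, Fintype.card_fin, nsmul_eq_mul]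
            ring
    linarith [hstep, hsum.symm.le, hsum.le]
  have hcont1 : Continuous fun v : EuclideanSpace ℝ (Fin d) => ⟪v, kwsa d F c x⟫ :=
    continuous_id.inner continuous_const
  have hcont2 : Continuous fun v : EuclideanSpace ℝ (Fin d) => ⟪v, g⟫ :=
    continuous_id.inner continuous_const
  obtain ⟨s, hsC, hsmin⟩ := hCcomp.exists_isMinOn hCne hcont2.continuousOn
  have hA : sInf ((fun v => ⟪v, kwsa d F c x⟫) '' C) ≤ ⟪s, kwsa d F c x⟫ :=
    csInf_le (hCcomp.image hcont1).bddBelow ⟨s, hsC, rfl⟩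
  have hB2 : ⟪s, g⟫ ≤ sInf ((fun v => ⟪v, g⟫) '' C) :=
    le_csInf (hCne.image _) (by rintro y ⟨u, hu, rfl⟩; exact hsmin hu)
  have := hvbound s hsC
  linarith
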